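/- For every a.e. strongly measurable x : Ω → A, the set spm(x) is (o)-closed, i.e., closed under almost-everywhere convergence: if (a_n) is a sequence of measurable functions Ω → ℂ with a_n ∈ spm(x) for every n, and a : Ω → ℂ is measurable with a_n(ω) → a(ω) for μ-almost every ω, then a ∈ spm(x). (Closedness part of Theorem 2.5, specialized to the Banach–Kantorovich algebra L⁰(Ω, A), where order convergence in L⁰ coincides with a.e. convergence.) -/

import Mathlib

open MeasureTheory Filter Topology

/-- `a ∈ spm(x)`: for every measurable set `S` of positive measure there is no a.e.
strongly measurable local inverse of `a·1 − x` on `S`. -/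
def MemSpm {Ω : Type*} [MeasurableSpace Ω] (μ : Measure Ω)
    {A : Type*} [NormedRing A] [NormedAlgebra ℂ A]
    (x : Ω → A) (a : Ω → ℂ) : Prop :=
  ∀ S : Set Ω, MeasurableSet S → 0 < μ S →
    ¬ ∃ y : Ω → A, AEStronglyMeasurable y μ ∧
      ∀ᵐ ω ∂μ, ω ∈ S →
        ((a ω • (1 : A) - x ω) * y ω = 1 ∧ y ω * (a ω • (1 : A) - x ω) = 1)

/-- `spm(x)` is (o)-closed, i.e. closed under a.e. convergence: if
`a n ∈ spm(x)` for every `n` and `a n ω → a ω` for μ-a.e. ω, with all functions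
measurable, then `a ∈ spm(x)`. (Closedness part of Theorem 2.5.) -/
theorem stmt9 {Ω : Type*} [MeasurableSpace Ω] (μ : Measure Ω) [IsFiniteMeasure μ]
    (hμ : 0 < μ Set.univ)
    {A : Type*} [NormedRing A] [NormedAlgebra ℂ A] [CompleteSpace A] [NormOneClass A]
    (x : Ω → A) (hx : AEStronglyMeasurable x μ)
    (a : ℕ → Ω → ℂ) (ha : ∀ n, Measurable (a n)) (haspm : ∀ n, MemSpm μ x (a n))
    (b : Ω → ℂ) (hb : Measurable b)
    (hconv : ∀ᵐ ω ∂μ, Tendsto (fun n => a n ω) atTop (𝓝 (b ω))) :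
    MemSpm μ x b := by
  intro S hS hSpos h
  obtain ⟨y, hy, hinv⟩ := h
  set y' : Ω → A := hy.mk y with hy'def
  have hy'sm : StronglyMeasurable y' := hy.stronglyMeasurable_mk
  -- the perturbation functions
  set v : ℕ → Ω → A := fun n ω => (a n ω - b ω) • y' ω with hvdef
  have hvsm : ∀ n, StronglyMeasurable (v n) := fun n =>
    ((ha n).sub hb).stronglyMeasurable.smul hy'sm
  -- the sets where the perturbation is small
  set T : ℕ → Set Ω := fun n => S ∩ {ω | ‖v n ω‖ < 1} with hTdef
  have hTmeas : ∀ n, MeasurableSet (T n) := fun n =>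
    hS.inter (measurableSet_lt (hvsm n).norm.measurable measurable_const)
  -- some T n has positive measure
  have hae : ∀ᵐ ω ∂μ, ω ∈ S → ω ∈ ⋃ n, T n := by
    filter_upwards [hconv] with ω ht hωS
    have h0 : Tendsto (fun n => ‖v n ω‖) atTop (𝓝 0) := by
      have h1 : Tendsto (fun n => a n ω - b ω) atTop (𝓝 0) := by
        simpa using ht.sub_const (b ω)
      have h2 := h1.norm.mul_const ‖y' ω‖
      simp only [norm_zero, zero_mul] at h2
      simpa [hvdef, norm_smul] using h2
    have : ∀ᶠ n in atTop, ‖v n ω‖ < 1 := h0.eventually (eventually_lt_nhds zero_lt_one)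
    obtain ⟨n, hn⟩ := this.exists
    exact Set.mem_iUnion.2 ⟨n, hωS, hn⟩
  have hexists : ∃ n, 0 < μ (T n) := by
    by_contra hc
    push_neg at hc
    have hnull : μ (⋃ n, T n) = 0 :=
      measure_iUnion_null fun n => le_antisymm (hc n) zero_le
    have hle : μ S ≤ μ (⋃ n, T n) := measure_mono_ae hae
    rw [hnull] at hle
    exact absurd (le_antisymm hle zero_le) hSpos.ne'
  obtain ⟨n, hTpos⟩ := hexists
  refine haspm n (T n) (hTmeas n) hTpos ?_
  -- the local inverse of `a n • 1 - x` on `T n`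
  refine ⟨(T n).indicator (fun ω => (∑' k : ℕ, (-(v n ω)) ^ k) * y' ω), ?_, ?_⟩
  · -- strong measurability via partial sums
    have hpart : ∀ N : ℕ, StronglyMeasurable
        ((T n).indicator (fun ω => (∑ k ∈ Finset.range N, (-(v n ω)) ^ k) * y' ω)) := by
      intro N
      refine StronglyMeasurable.indicator ?_ (hTmeas n)
      refine StronglyMeasurable.mul ?_ hy'sm
      refine Finset.stronglyMeasurable_fun_sum _ fun k _ => ?_
      exact (continuous_pow k).comp_stronglyMeasurable (hvsm n).neg
    have hlim : Tendsto
        (fun N => (T n).indicator (fun ω => (∑ k ∈ Finset.range N, (-(v n ω)) ^ k) * y' ω))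
        atTop (𝓝 ((T n).indicator (fun ω => (∑' k : ℕ, (-(v n ω)) ^ k) * y' ω))) := by
      rw [tendsto_pi_nhds]
      intro ω
      by_cases hω : ω ∈ T n
      · simp only [Set.indicator_of_mem hω]
        have hnorm : ‖-(v n ω)‖ < 1 := by
          rw [norm_neg]; exact hω.2
        exact ((summable_geometric_of_norm_lt_one hnorm).hasSum.tendsto_sum_nat).mul_const _
      · simp only [Set.indicator_of_notMem hω]
        exact tendsto_const_nhds
    exact (stronglyMeasurable_of_tendsto atTop hpart hlim).aestronglyMeasurable
  · -- a.e. inverse property on T n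
    filter_upwards [hinv, hy.ae_eq_mk] with ω hw heq hωT
    have hωS : ω ∈ S := hωT.1
    have hnorm : ‖-(v n ω)‖ < 1 := by rw [norm_neg]; exact hωT.2
    obtain ⟨h1, h2⟩ := hw hωS
    rw [heq] at h1 h2
    set c : ℂ := a n ω - b ω with hcdef
    set w : A := b ω • (1 : A) - x ω with hwdef
    set Y : A := y' ω with hYdef
    have hv : v n ω = c • Y := rfl
    set u : Aˣ := Units.oneSub (-(v n ω)) hnorm with hudef
    have hu_val : (u : A) = 1 + c • Y := by
      rw [hudef, Units.val_oneSub, sub_neg_eq_add, hv]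
    have hu_inv : ((u⁻¹ : Aˣ) : A) = ∑' k : ℕ, (-(v n ω)) ^ k := rfl
    have hz : (T n).indicator (fun ω => (∑' k : ℕ, (-(v n ω)) ^ k) * y' ω) ω
        = ((u⁻¹ : Aˣ) : A) * Y := by
      rw [Set.indicator_of_mem hωT, hu_inv]
    have hs : a n ω • (1 : A) - x ω = w + c • (1 : A) := by
      rw [hwdef, hcdef]
      module
    have hsl : a n ω • (1 : A) - x ω = (u : A) * w := by
      rw [hs, hu_val, add_mul, one_mul, smul_mul_assoc, h2]
    have hsr : a n ω • (1 : A) - x ω = w * (u : A) := by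
      rw [hs, hu_val, mul_add, mul_one, mul_smul_comm, h1]
    have hcomm : Commute Y (u : A) := by
      rw [hu_val]
      exact (Commute.one_right Y).add_right ((Commute.refl Y).smul_right c)
    have hcomm' : Commute Y ((u⁻¹ : Aˣ) : A) := hcomm.units_inv_right
    rw [hz]
    constructor
    · calc (a n ω • (1 : A) - x ω) * (((u⁻¹ : Aˣ) : A) * Y)
          = w * ((u : A) * ((u⁻¹ : Aˣ) : A)) * Y := by rw [hsr]; simp only [mul_assoc]
        _ = w * Y := by rw [u.mul_inv, mul_one]
        _ = 1 := h1
    · calc ((u⁻¹ : Aˣ) : A) * Y * (a n ω • (1 : A) - x ω)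
          = ((u⁻¹ : Aˣ) : A) * (Y * (u : A)) * w := by rw [hsl]; simp only [mul_assoc]
        _ = ((u⁻¹ : Aˣ) : A) * ((u : A) * Y) * w := by rw [hcomm.eq]
        _ = (((u⁻¹ : Aˣ) : A) * (u : A)) * (Y * w) := by simp only [mul_assoc]
        _ = 1 := by rw [u.inv_mul, one_mul, h2]
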